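/- Every permutation of the positive integers contains, as a subsequence, a 3-term arithmetic progression with odd common difference. That is, for every bijection a : ℕ⁺ → ℕ⁺ there exist indices i < j < k with a(j) − a(i) = a(k) − a(j) and a(j) − a(i) odd. -/

import Mathlib

theorem perm_pnat_has_odd_3AP (a : ℕ+ → ℕ+) (ha : Function.Bijective a) :
    ∃ i j k : ℕ+, i < j ∧ j < k ∧
      (((a j : ℕ) : ℤ) - ((a i : ℕ) : ℤ) = ((a k : ℕ) : ℤ) - ((a j : ℕ) : ℤ)) ∧
      Odd (((a j : ℕ) : ℤ) - ((a i : ℕ) : ℤ)) := by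
  by_contra hcon
  push_neg at hcon
  set e := Equiv.ofBijective a ha with he
  have hapos : ∀ v : ℕ+, a (e.symm v) = v := fun v => e.apply_symm_apply v
  set pos : ℕ+ → ℕ := fun v => ((e.symm v : ℕ+) : ℕ) with hposdef
  have posinj : ∀ v w : ℕ+, pos v = pos w → v = w := by
    intro v w h
    have : e.symm v = e.symm w := PNat.coe_injective h
    have := congrArg e this
    simpa [e.apply_symm_apply] using this
  have L1 : ∀ t m w : ℕ+, 2 * (m : ℕ) = (t : ℕ) + (w : ℕ) → (m : ℕ) % 2 ≠ (t : ℕ) % 2 →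
      ¬ (pos t < pos m ∧ pos m < pos w) := by
    rintro t m w h2 hpar ⟨hlt1, hlt2⟩
    have h1 : e.symm t < e.symm m := (PNat.coe_lt_coe _ _).mp hlt1
    have h2' : e.symm m < e.symm w := (PNat.coe_lt_coe _ _).mp hlt2
    have heq : ((a (e.symm m) : ℕ) : ℤ) - ((a (e.symm t) : ℕ) : ℤ)
        = ((a (e.symm w) : ℕ) : ℤ) - ((a (e.symm m) : ℕ) : ℤ) := by
      simp only [hapos]; omega
    have hodd : Odd (((a (e.symm m) : ℕ) : ℤ) - ((a (e.symm t) : ℕ) : ℤ)) := by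
      simp only [hapos]
      rw [Int.odd_iff]
      omega
    exact hcon (e.symm t) (e.symm m) (e.symm w) h1 h2' heq hodd
  -- Q bounds the positions of the anchor values 1,2,3,4
  set Q : ℕ := (Finset.range 5).sup (fun n => if h : 0 < n then pos ⟨n, h⟩ else 0) with hQdef
  have hQ : ∀ v : ℕ+, (v : ℕ) ≤ 4 → pos v ≤ Q := by
    intro v hv
    obtain ⟨n, hn⟩ := v
    have hmem : n ∈ Finset.range 5 := by
      exact Finset.mem_range.mpr (Nat.lt_succ_of_le hv)
    have := Finset.le_sup (f := fun n => if h : 0 < n then pos ⟨n, h⟩ else 0) hmem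
    simp only [dif_pos hn] at this
    exact this
  -- B bounds the values occurring at positions ≤ Q
  set B : ℕ := (Finset.range (Q + 1)).sup
      (fun n => if h : 0 < n then ((a ⟨n, h⟩ : ℕ+) : ℕ) else 0) with hBdef
  have hB : ∀ v : ℕ+, pos v ≤ Q → (v : ℕ) ≤ B := by
    intro v hv
    have hmem : pos v ∈ Finset.range (Q + 1) := by
      simp only [Finset.mem_range]; omega
    have := Finset.le_sup (f := fun n => if h : 0 < n then ((a ⟨n, h⟩ : ℕ+) : ℕ) else 0) hmem
    simp only [dif_pos (show 0 < pos v from (e.symm v).pos)] at this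
    have hv2 : a ⟨pos v, (e.symm v).pos⟩ = v := by
      have : (⟨pos v, (e.symm v).pos⟩ : ℕ+) = e.symm v := rfl
      rw [this, hapos]
    rwa [hv2] at this
  set C : ℕ := 2 * B + 8 with hCdef
  -- Step lemma
  have step : ∀ w : ℕ+, C < (w : ℕ) → ∃ m : ℕ+, (m : ℕ) < (w : ℕ) ∧ pos w < pos m := by
    intro w hw
    obtain ⟨tn, htn1, htn4, htmod⟩ : ∃ tn, 1 ≤ tn ∧ tn ≤ 4 ∧ tn % 4 = ((w : ℕ) + 2) % 4 :=
      ⟨((w : ℕ) + 1) % 4 + 1, by omega, by omega, by omega⟩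
    set t : ℕ+ := ⟨tn, by omega⟩ with htdef
    have htval : (t : ℕ) = tn := rfl
    obtain ⟨mn, hmn1, hmn2, hmn3, hmn4⟩ :
        ∃ mn, 2 * mn = (w : ℕ) + tn ∧ mn % 2 ≠ tn % 2 ∧ 0 < mn ∧ mn < (w : ℕ) := by
      refine ⟨((w : ℕ) + tn) / 2, by omega, by omega, by omega, by omega⟩
    set m : ℕ+ := ⟨mn, hmn3⟩ with hmdef
    have hmval : (m : ℕ) = mn := rfl
    have hL := L1 t m w (by rw [hmval, htval]; omega) (by rw [hmval, htval]; exact hmn2)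
    have htB : (t : ℕ) ≤ B := hB t (hQ t (by omega))
    have htw : pos t < pos w := by
      rcases lt_trichotomy (pos t) (pos w) with h | h | h
      · exact h
      · exfalso
        have := posinj t w h
        have : (t : ℕ) = (w : ℕ) := by rw [this]
        omega
      · exfalso
        have hwB : (w : ℕ) ≤ B := hB w (le_trans (le_of_lt h) (hQ t (by omega)))
        omega
    rcases lt_trichotomy (pos w) (pos m) with h | h | h
    · exact ⟨m, hmn4, h⟩
    · exfalso
      have := posinj m w h.symm
      have : (w : ℕ) = (m : ℕ) := by rw [this]
      omega
    · exfalso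
      rcases lt_trichotomy (pos m) (pos t) with h' | h' | h'
      · have hmB : (m : ℕ) ≤ B := hB m (le_trans (le_of_lt h') (hQ t (by omega)))
        omega
      · have := posinj m t h'
        have : (m : ℕ) = (t : ℕ) := by rw [this]
        omega
      · exact hL ⟨h', h⟩
  -- P bounds the positions of values ≤ C
  set P : ℕ := (Finset.range (C + 1)).sup (fun n => if h : 0 < n then pos ⟨n, h⟩ else 0) with hPdef
  have hP : ∀ v : ℕ+, (v : ℕ) ≤ C → pos v ≤ P := by
    intro v hv
    obtain ⟨n, hn⟩ := v
    have hmem : n ∈ Finset.range (C + 1) := by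
      exact Finset.mem_range.mpr (Nat.lt_succ_of_le hv)
    have := Finset.le_sup (f := fun n => if h : 0 < n then pos ⟨n, h⟩ else 0) hmem
    simp only [dif_pos hn] at this
    exact this
  -- descent: every large value has position ≤ P
  have desc : ∀ n : ℕ, ∀ w : ℕ+, (w : ℕ) ≤ n → C < (w : ℕ) → pos w ≤ P := by
    intro n
    induction n with
    | zero => intro w h1 h2; omega
    | succ n ih =>
      intro w h1 h2
      obtain ⟨m, hm1, hm2⟩ := step w h2
      by_cases hc : C < (m : ℕ)
      · have := ih m (by omega) hc
        omega
      · have := hP m (by omega)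
        omega
  -- final contradiction
  have key : ∀ n ∈ Finset.Icc (P + 1) (P + C + 1),
      (if h : 0 < n then ((a ⟨n, h⟩ : ℕ+) : ℕ) else 0) ≤ C := by
    intro n hn
    simp only [Finset.mem_Icc] at hn
    have hn0 : 0 < n := by omega
    rw [dif_pos hn0]
    by_contra hgt
    push_neg at hgt
    have hpos : pos (a ⟨n, hn0⟩) = n := by
      show ((e.symm (a ⟨n, hn0⟩) : ℕ+) : ℕ) = n
      have : e.symm (a ⟨n, hn0⟩) = ⟨n, hn0⟩ := e.symm_apply_apply ⟨n, hn0⟩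
      rw [this]
      rfl
    have := desc (a ⟨n, hn0⟩ : ℕ) (a ⟨n, hn0⟩) le_rfl hgt
    omega
  -- count: the map n ↦ value at position n is injective on Icc, image in Icc 1 C
  have hinj : Set.InjOn (fun n => if h : 0 < n then ((a ⟨n, h⟩ : ℕ+) : ℕ) else 0)
      (Finset.Icc (P + 1) (P + C + 1)) := by
    intro x hx y hy hxy
    simp only [Finset.coe_Icc, Set.mem_Icc] at hx hy
    have hx0 : 0 < x := by omega
    have hy0 : 0 < y := by omega
    simp only [dif_pos hx0, dif_pos hy0] at hxy
    have : a ⟨x, hx0⟩ = a ⟨y, hy0⟩ := PNat.coe_injective hxy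
    have := ha.injective this
    exact congrArg PNat.val this
  have hmaps : ∀ n ∈ Finset.Icc (P + 1) (P + C + 1),
      (if h : 0 < n then ((a ⟨n, h⟩ : ℕ+) : ℕ) else 0) ∈ Finset.Icc 1 C := by
    intro n hn
    have h1 := key n hn
    simp only [Finset.mem_Icc] at hn ⊢
    have hn0 : 0 < n := by omega
    rw [dif_pos hn0] at h1 ⊢
    exact ⟨(a ⟨n, hn0⟩).pos, h1⟩
  have hcard := Finset.card_le_card_of_injOn _ hmaps hinj
  simp only [Nat.card_Icc] at hcard
  omega
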